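/- Let G : ℝ → ℂ and T > 0, and let a, b be positive integers with b > 1. Suppose there exists an Altshuller multiplier with period T suitable for G, i.e. a summable h : ℤ → ℝ with hₙ ≥ 0, h₀ = 0 and Σ_{n∈ℤ} hₙ < 1 such that, with M(ω) = 1 − Σ_{n∈ℤ} hₙ e^{−iωnT}, Re(M(ω)·G(ω)) > 0 for all ω ∈ ℝ. Then G((a/b)(2π/T)) ≠ 0 and its principal argument satisfies |arg G((a/b)(2π/T))| ≤ π(1 − 1/b). -/

import Mathlib

open Complex Real

/-- Altshuller multiplier data: a summable family `h : ℤ → ℝ` with `hₙ ≥ 0`,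
`h₀ = 0` and `Σₙ hₙ < 1`. -/
def AltshullerData (h : ℤ → ℝ) : Prop :=
  Summable h ∧ (∀ n : ℤ, 0 ≤ h n) ∧ h 0 = 0 ∧ ∑' n : ℤ, h n < 1

/-- The frequency response of an Altshuller multiplier with period `T`:
`M(ω) = 1 − Σₙ hₙ e^{−iωnT}`. -/
noncomputable def altFreq (h : ℤ → ℝ) (T ω : ℝ) : ℂ :=
  1 - ∑' n : ℤ, (h n : ℂ) * Complex.exp (-(Complex.I * ω * n * T))

section Aux

private lemma sector_term {β x : ℝ} (hβ : 0 ≤ β) (hx1 : β ≤ x) (hx2 : x ≤ π - β) :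
    Real.sin β * |Real.sin (2 * x)| ≤ Real.cos β * (1 - Real.cos (2 * x)) := by
  have hsx : 0 ≤ Real.sin x := Real.sin_nonneg_of_nonneg_of_le_pi (by linarith) (by linarith)
  have hsβ : 0 ≤ Real.sin β := Real.sin_nonneg_of_nonneg_of_le_pi hβ (by linarith)
  have h1 : 0 ≤ Real.sin (x - β) :=
    Real.sin_nonneg_of_nonneg_of_le_pi (by linarith) (by linarith)
  have h2 : 0 ≤ Real.sin (x + β) :=
    Real.sin_nonneg_of_nonneg_of_le_pi (by linarith) (by linarith)
  rw [Real.sin_sub] at h1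
  rw [Real.sin_add] at h2
  have key : |Real.sin β * Real.cos x| ≤ Real.cos β * Real.sin x :=
    abs_le.mpr ⟨by nlinarith, by nlinarith⟩
  have h3 : 1 - Real.cos (2 * x) = 2 * Real.sin x ^ 2 := by
    have := Real.sin_sq_add_cos_sq x
    rw [Real.cos_two_mul]; nlinarith
  rw [Real.sin_two_mul, h3]
  have h4 : |2 * Real.sin x * Real.cos x| = 2 * Real.sin x * |Real.cos x| := by
    rw [abs_mul, _root_.abs_of_nonneg (by positivity : (0:ℝ) ≤ 2 * Real.sin x)]
  rw [h4]
  have h5 : Real.sin β * |Real.cos x| = |Real.sin β * Real.cos x| := by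
    rw [abs_mul, _root_.abs_of_nonneg hsβ]
  nlinarith [mul_le_mul_of_nonneg_left key (by positivity : (0:ℝ) ≤ 2 * Real.sin x),
    abs_nonneg (Real.cos x)]

private lemma term_ineq {b : ℕ} (hb : 1 < b) (m : ℤ) :
    Real.sin (π / b) * |Real.sin (2 * π * m / b)| ≤
      Real.cos (π / b) * (1 - Real.cos (2 * π * m / b)) := by
  have hb0 : (0:ℝ) < b := by exact_mod_cast Nat.zero_lt_of_lt hb
  have hbZ : (0:ℤ) < (b:ℤ) := by exact_mod_cast Nat.zero_lt_of_lt hb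
  set q : ℤ := m / (b:ℤ) with hq
  set r : ℤ := m % (b:ℤ) with hr
  have hqr : (b:ℤ) * q + r = m := Int.mul_ediv_add_emod m (b:ℤ)
  have hm : (m:ℝ) = (b:ℝ) * (q:ℝ) + (r:ℝ) := by exact_mod_cast hqr.symm
  have hθ : 2 * π * (m:ℝ) / b = 2 * π * (r:ℝ) / b + (q:ℤ) * (2 * π) := by
    rw [hm]
    field_simp
    ring
  rw [hθ, Real.sin_add_int_mul_two_pi, Real.cos_add_int_mul_two_pi]
  have hr0 : 0 ≤ r := Int.emod_nonneg m (by omega)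
  have hrb : r < b := Int.emod_lt_of_pos m hbZ
  rcases eq_or_lt_of_le hr0 with h0 | h0
  · rw [← h0]
    simp
  · have h1r : (1:ℝ) ≤ (r:ℝ) := by exact_mod_cast h0
    have hrb' : (r:ℝ) ≤ (b:ℝ) - 1 := by
      have h' : r ≤ (b:ℤ) - 1 := by omega
      have := (Int.cast_le (R := ℝ)).mpr h'
      push_cast at this
      linarith
    have hx : 2 * π * (r:ℝ) / b = 2 * (π * r / b) := by ring
    rw [hx]
    apply sector_term (by positivity)
    · rw [div_le_div_iff₀ hb0 hb0]
      nlinarith [mul_nonneg (mul_nonneg Real.pi_pos.le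
        (by linarith : (0:ℝ) ≤ (r:ℝ) - 1)) hb0.le]
    · have hrepr : π - π / b = π * ((b:ℝ) - 1) / b := by
        field_simp
      rw [hrepr, div_le_div_iff₀ hb0 hb0]
      nlinarith [mul_nonneg (mul_nonneg Real.pi_pos.le
        (by linarith : (0:ℝ) ≤ (b:ℝ) - 1 - (r:ℝ))) hb0.le]

private lemma re_aux (c x : ℝ) :
    ((c:ℂ) * Complex.exp ((x:ℂ) * Complex.I)).re = c * Real.cos x := by
  rw [Complex.mul_re, Complex.exp_ofReal_mul_I_re, Complex.exp_ofReal_mul_I_im]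
  simp

private lemma im_aux (c x : ℝ) :
    ((c:ℂ) * Complex.exp ((x:ℂ) * Complex.I)).im = c * Real.sin x := by
  rw [Complex.mul_im, Complex.exp_ofReal_mul_I_re, Complex.exp_ofReal_mul_I_im]
  simp

private lemma abs_arg_le_of {z : ℂ} (hz : z ≠ 0) {t : ℝ} (ht0 : 0 ≤ t) (htπ : t ≤ π)
    (hre : ‖z‖ * Real.cos t ≤ z.re) : |Complex.arg z| ≤ t := by
  by_contra hc
  push_neg at hc
  have h1 : Real.cos |z.arg| < Real.cos t :=
    Real.strictAntiOn_cos ⟨ht0, htπ⟩ ⟨abs_nonneg _, Complex.abs_arg_le_pi z⟩ hc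
  rw [Real.cos_abs, Complex.cos_arg hz] at h1
  have h3 : 0 < ‖z‖ := norm_pos_iff.mpr hz
  rw [div_lt_iff₀ h3] at h1
  nlinarith

end Aux

set_option maxHeartbeats 1000000 in
/-- Phase limitation on plants admitting a suitable Altshuller multiplier: if some
Altshuller multiplier with period `T` is suitable for `G`, then at the frequency
`ω = (a/b)(2π/T)` (with `a, b` positive integers, `b > 1`) we have `G(ω) ≠ 0` and
`|arg G(ω)| ≤ π(1 − 1/b)`. -/
theorem plant_phase_limitation (G : ℝ → ℂ) (T : ℝ) (hT : 0 < T)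
    (a b : ℕ) (ha : 0 < a) (hb : 1 < b)
    (hsuit : ∃ h : ℤ → ℝ, AltshullerData h ∧
      ∀ ω : ℝ, 0 < (altFreq h T ω * G ω).re) :
    G ((a / b) * (2 * π / T)) ≠ 0 ∧
    |Complex.arg (G ((a / b) * (2 * π / T)))| ≤ π * (1 - 1 / b) := by
  obtain ⟨h, ⟨hsum, hpos, h00, hlt⟩, hsuit⟩ := hsuit
  have hb0 : (0:ℝ) < b := by exact_mod_cast Nat.zero_lt_of_lt hb
  set ω : ℝ := ((a:ℝ) / b) * (2 * π / T) with hω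
  set g : ℂ := G ω with hg
  set β : ℝ := π / b with hβdef
  have hβ0 : 0 < β := by positivity
  have hβπ2 : β ≤ π / 2 := by
    rw [hβdef, div_le_div_iff₀ hb0 (by norm_num : (0:ℝ) < 2)]
    have hb2 : (2:ℝ) ≤ b := by exact_mod_cast hb
    nlinarith [Real.pi_pos, hb2]
  have hsinβ : 0 < Real.sin β :=
    Real.sin_pos_of_pos_of_lt_pi hβ0 (by nlinarith [Real.pi_pos])
  have hcosβ : 0 ≤ Real.cos β := Real.cos_nonneg_of_mem_Icc ⟨by linarith, hβπ2⟩
  have hθ : ∀ n : ℤ, ω * n * T = 2 * π * ((a:ℤ) * n : ℤ) / b := by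
    intro n
    rw [hω]
    push_cast
    field_simp
  set f : ℤ → ℂ := fun n => (h n : ℂ) * Complex.exp (-(Complex.I * ω * n * T)) with hf
  have hexp : ∀ n : ℤ, f n = (h n : ℂ) * Complex.exp ((↑(-(ω * n * T)) : ℂ) * Complex.I) := by
    intro n
    rw [hf]
    push_cast
    ring_nf
  have hfre : ∀ n : ℤ, (f n).re = h n * Real.cos (ω * n * T) := by
    intro n
    rw [hexp n, re_aux, Real.cos_neg]
  have hfim : ∀ n : ℤ, (f n).im = -(h n * Real.sin (ω * n * T)) := by
    intro n
    rw [hexp n, im_aux, Real.sin_neg, mul_neg]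
  have hfnorm : ∀ n : ℤ, ‖f n‖ ≤ h n := by
    intro n
    rw [hexp n, norm_mul, Complex.norm_real,
      Complex.norm_exp_ofReal_mul_I, mul_one, Real.norm_eq_abs, _root_.abs_of_nonneg (hpos n)]
  have hfs : Summable f := Summable.of_norm_bounded hsum hfnorm
  have smul : ∀ (u : ℤ → ℝ) (c : ℝ), (∀ n, |u n| ≤ c) → Summable (fun n => h n * u n) := by
    intro u c hu
    apply Summable.of_norm_bounded (hsum.mul_left c)
    intro n
    rw [Real.norm_eq_abs, abs_mul, _root_.abs_of_nonneg (hpos n)]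
    calc h n * |u n| ≤ h n * c := mul_le_mul_of_nonneg_left (hu n) (hpos n)
      _ = c * h n := by ring
  have scos : Summable (fun n => h n * Real.cos (ω * n * T)) :=
    smul _ 1 (fun n => Real.abs_cos_le_one _)
  have ssin : Summable (fun n => h n * Real.sin (ω * n * T)) :=
    smul _ 1 (fun n => Real.abs_sin_le_one _)
  have sabssin : Summable (fun n => h n * |Real.sin (ω * n * T)|) :=
    smul _ 1 (fun n => by rw [_root_.abs_abs]; exact Real.abs_sin_le_one _)
  have sonecos : Summable (fun n => h n * (1 - Real.cos (ω * n * T))) :=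
    smul _ 2 (fun n => by
      have h1 := Real.neg_one_le_cos (ω * n * T)
      have h2 := Real.cos_le_one (ω * n * T)
      rw [abs_le]
      constructor <;> linarith)
  set M : ℂ := altFreq h T ω with hM
  have hMre : M.re = 1 - ∑' n : ℤ, h n * Real.cos (ω * n * T) := by
    rw [hM, altFreq, Complex.sub_re, Complex.one_re, Complex.re_tsum hfs]
    congr 1
    exact tsum_congr hfre
  have hMim : M.im = ∑' n : ℤ, h n * Real.sin (ω * n * T) := by
    rw [hM, altFreq, Complex.sub_im, Complex.one_im, Complex.im_tsum hfs, zero_sub, ← tsum_neg]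
    apply tsum_congr
    intro n
    rw [hfim n, neg_neg]
  have hcos_le : ∑' n : ℤ, h n * Real.cos (ω * n * T) ≤ ∑' n : ℤ, h n := by
    apply Summable.tsum_le_tsum _ scos hsum
    intro n
    nlinarith [Real.cos_le_one (ω * n * T), hpos n]
  have hMrepos : 0 < M.re := by rw [hMre]; linarith
  have hkey : Real.sin β * |M.im| ≤ Real.cos β * M.re := by
    have step1 : |M.im| ≤ ∑' n : ℤ, h n * |Real.sin (ω * n * T)| := by
      rw [hMim]
      have habs : ∀ n : ℤ, ‖h n * Real.sin (ω * n * T)‖ = h n * |Real.sin (ω * n * T)| := by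
        intro n
        rw [Real.norm_eq_abs, abs_mul, _root_.abs_of_nonneg (hpos n)]
      calc |∑' n : ℤ, h n * Real.sin (ω * n * T)|
          ≤ ∑' n : ℤ, ‖h n * Real.sin (ω * n * T)‖ := by
            rw [← Real.norm_eq_abs]
            exact norm_tsum_le_tsum_norm (by simpa only [habs] using sabssin)
        _ = ∑' n : ℤ, h n * |Real.sin (ω * n * T)| := tsum_congr habs
    have step2 : ∑' n : ℤ, Real.sin β * (h n * |Real.sin (ω * n * T)|) ≤
        ∑' n : ℤ, Real.cos β * (h n * (1 - Real.cos (ω * n * T))) := by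
      apply Summable.tsum_le_tsum _ (sabssin.mul_left _) (sonecos.mul_left _)
      intro n
      have hti := term_ineq hb ((a:ℤ) * n)
      rw [← hθ n] at hti
      nlinarith [hpos n]
    rw [tsum_mul_left, tsum_mul_left] at step2
    have step3 : ∑' n : ℤ, h n * (1 - Real.cos (ω * n * T)) =
        (∑' n : ℤ, h n) - ∑' n : ℤ, h n * Real.cos (ω * n * T) := by
      rw [← Summable.tsum_sub hsum scos]
      apply tsum_congr
      intro n
      ring
    have step4 : Real.sin β * |M.im| ≤
        Real.sin β * ∑' n : ℤ, h n * |Real.sin (ω * n * T)| :=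
      mul_le_mul_of_nonneg_left step1 hsinβ.le
    have step5 : Real.cos β * (∑' n : ℤ, h n * (1 - Real.cos (ω * n * T))) ≤
        Real.cos β * M.re := by
      rw [step3, hMre]
      apply mul_le_mul_of_nonneg_left _ hcosβ
      linarith
    linarith
  have hre : 0 < (M * g).re := hsuit ω
  clear_value M
  clear hsuit hθ hexp hfre hfim hfnorm hfs smul scos ssin sabssin sonecos hcos_le hMre hMim hsum hpos h00 hlt
  clear_value g β ω
  clear hf f hω hg hM G h T hT ha a ω
  have hgne : g ≠ 0 := by
    intro h0
    rw [h0, mul_zero] at hre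
    simp at hre
  refine ⟨hgne, ?_⟩
  have hmain : ‖g‖ * Real.cos (π - β) ≤ g.re := by
    rw [Real.cos_pi_sub]
    by_contra hcon
    push_neg at hcon
    have hcon' : g.re < -(‖g‖ * Real.cos β) := by linarith
    have habsg : 0 < ‖g‖ := norm_pos_iff.mpr hgne
    have hsq : ‖g‖ ^ 2 = g.re ^ 2 + g.im ^ 2 := by
      rw [Complex.sq_norm, Complex.normSq_apply]
      ring
    have hIm2 : g.im ^ 2 < (‖g‖ * Real.sin β) ^ 2 := by
      nlinarith [Real.sin_sq_add_cos_sq β, mul_nonneg habsg.le hcosβ]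
    have hIm : |g.im| < ‖g‖ * Real.sin β := by
      nlinarith [abs_nonneg g.im, _root_.sq_abs g.im, mul_pos habsg hsinβ]
    have hneg : Real.sin β * g.re + Real.cos β * |g.im| < 0 := by
      nlinarith [mul_lt_mul_of_pos_left hcon' hsinβ, mul_le_mul_of_nonneg_left hIm.le hcosβ]
    have hmul : 0 < Real.sin β * (M * g).re := mul_pos hsinβ hre
    rw [Complex.mul_re] at hmul
    have t1 : -(Real.sin β * (M.im * g.im)) ≤ Real.sin β * (|M.im| * |g.im|) := by
      have ht : -(M.im * g.im) ≤ |M.im| * |g.im| := by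
        rw [← _root_.abs_mul]
        exact neg_le_abs (M.im * g.im)
      nlinarith
    have t2 : Real.sin β * |M.im| * |g.im| ≤ Real.cos β * M.re * |g.im| :=
      mul_le_mul_of_nonneg_right hkey (abs_nonneg _)
    have t3 : M.re * (Real.sin β * g.re + Real.cos β * |g.im|) < 0 :=
      mul_neg_of_pos_of_neg hMrepos hneg
    nlinarith
  have harg : |Complex.arg g| ≤ π - β :=
    abs_arg_le_of hgne (by linarith) (by linarith) hmain
  have hfin : π - β = π * (1 - 1 / b) := by rw [hβdef]; ring
  rw [← hfin]
  exact harg
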